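/- Let f : ℂ → ℂ be an entire function with f(0) = 0 and f'(0) = 1 which is not identically equal to the identity. Then it is not the case that every z ∈ ℂ \ {0} satisfies both: fⁿ(z) ≠ 0 for all n ∈ ℕ, and fⁿ(z) → 0 as n → ∞. (In other words, the parabolic basin of 0 is never all of ℂ*.) -/

import Mathlib

open Filter Metric Set Finset

set_option maxHeartbeats 2000000 in
/-- Let `f : ℂ → ℂ` be entire with `f 0 = 0`, `f' 0 = 1`, not identically
the identity. Then the parabolic basin of `0` is never all of `ℂ*`: it is not the case
that every `z ≠ 0` satisfies `fⁿ(z) ≠ 0` for all `n` and `fⁿ(z) → 0`. -/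
theorem stmt_0 (f : ℂ → ℂ) (hf : Differentiable ℂ f) (h0 : f 0 = 0)
    (h1 : deriv f 0 = 1) (hne : ∃ z : ℂ, f z ≠ z) :
    ¬ (∀ z : ℂ, z ≠ 0 →
        (∀ n : ℕ, f^[n] z ≠ 0) ∧
        Filter.Tendsto (fun n => f^[n] z) Filter.atTop (nhds 0)) := by
  intro hH
  -- Basic facts about iterates
  have hit : ∀ n, Differentiable ℂ (f^[n]) := fun n => hf.iterate n
  have h0n : ∀ n, f^[n] 0 = 0 := fun n => Function.iterate_fixed h0 n
  have hdn : ∀ n, deriv (f^[n]) 0 = 1 := by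
    intro n
    induction n with
    | zero => simp
    | succ n ih =>
      rw [Function.iterate_succ']
      rw [deriv_comp 0 (hf.differentiableAt) ((hit n).differentiableAt)]
      rw [h0n n, h1, ih, one_mul]
  -- The order of vanishing of f z - z at 0
  have hd : Differentiable ℂ (fun z => f z - z) := hf.sub differentiable_id
  have hda : AnalyticAt ℂ (fun z => f z - z) 0 := hd.analyticAt 0
  have horder : analyticOrderAt (fun z => f z - z) 0 ≠ ⊤ := by
    intro htop
    rw [analyticOrderAt_eq_top] at htop
    have hall : Set.EqOn (fun z => f z - z) 0 Set.univ := by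
      apply AnalyticOnNhd.eqOn_zero_of_preconnected_of_eventuallyEq_zero
        (fun z _ => hd.analyticAt z) isPreconnected_univ (Set.mem_univ (0:ℂ))
      exact htop
    obtain ⟨z, hz⟩ := hne
    have := hall (Set.mem_univ z)
    simp only [Pi.zero_apply, sub_eq_zero] at this
    exact hz this
  obtain ⟨k, hk⟩ : ∃ k : ℕ, analyticOrderAt (fun z => f z - z) 0 = (k : ℕ∞) := by
    lift analyticOrderAt (fun z => f z - z) 0 to ℕ using horder with k hk
    exact ⟨k, rfl⟩
  obtain ⟨φ, hφa, hφ0, hdeq⟩ := (hda.analyticOrderAt_eq_natCast (n := k)).mp hk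
  simp only [sub_zero, smul_eq_mul] at hdeq
  have hk0 : k ≠ 0 := by
    intro h
    subst h
    have h00 : f 0 - 0 = 0 := by simp [h0]
    have := hdeq.self_of_nhds
    simp only [h00, pow_zero, one_mul] at this
    exact hφ0 this.symm
  have hk1 : k ≠ 1 := by
    intro h
    subst h
    have hderiv_d : deriv (fun z => f z - z) 0 = 0 := by
      have hh : HasDerivAt (fun z => f z - z) (1 - 1) 0 :=
        (h1 ▸ hf.differentiableAt.hasDerivAt).sub (hasDerivAt_id 0)
      simpa using hh.deriv
    have h2 : deriv (fun z => f z - z) 0 = φ 0 := by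
      have hev : (fun z => f z - z) =ᶠ[nhds 0] fun z => z ^ 1 * φ z := hdeq
      rw [hev.deriv_eq]
      have : HasDerivAt (fun z : ℂ => z ^ 1 * φ z) (1 * φ 0 + 0 * deriv φ 0) 0 := by
        simpa using ((hasDerivAt_id (0:ℂ)).fun_mul hφa.differentiableAt.hasDerivAt)
      simpa using this.deriv
    rw [hderiv_d] at h2
    exact hφ0 h2.symm
  -- Set m with k = m + 1, m ≥ 1
  obtain ⟨m, hm, hkm⟩ : ∃ m : ℕ, 1 ≤ m ∧ k = m + 1 := ⟨k - 1, by omega, by omega⟩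
  rw [hkm] at hdeq
  clear hk hk0 hk1 hkm horder hda hd
  -- The approximate Fatou coordinate W
  set a : ℂ := φ 0 with ha_def
  set c : ℂ := (m : ℂ) * a with hc_def
  have hm0 : (m : ℂ) ≠ 0 := Nat.cast_ne_zero.mpr (by omega)
  have hc : c ≠ 0 := mul_ne_zero hm0 hφ0
  set W : ℂ → ℂ := fun z => -(c * z ^ m)⁻¹ with hW_def
  set t : ℂ → ℂ := fun z => z ^ m * φ z with ht_def
  have htt : Filter.Tendsto t (nhds 0) (nhds 0) := by
    have : Filter.Tendsto t (nhds 0) (nhds ((0:ℂ) ^ m * φ 0)) :=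
      ((continuous_pow m).continuousAt).mul hφa.continuousAt
    simpa [zero_pow (by omega : m ≠ 0)] using this
  set h : ℂ → ℂ := fun s => (∑ j ∈ Finset.range m, (1 + s)^j) * (((1 + s)^m)⁻¹) with hh_def
  have hhc : ContinuousAt h 0 := by
    apply ContinuousAt.mul
    · exact (continuous_finset_sum _
        (fun j _ => ((continuous_const.add continuous_id).pow j))).continuousAt
    · apply ContinuousAt.inv₀ ((continuous_const.add continuous_id).pow m).continuousAt
      simp
  have hh0 : h 0 = (m : ℂ) := by simp [hh_def]
  have hsm : ∀ᶠ z in nhds (0:ℂ), ‖t z‖ < 1/2 := by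
    have h2 := Metric.tendsto_nhds.mp htt (1/2) (by norm_num)
    simpa [dist_zero_right] using h2
  -- W (f z) - W z → 1 as z → 0
  have hev : ∀ᶠ z in nhdsWithin 0 {z : ℂ | z ≠ 0},
      W (f z) - W z = (φ z / c) * h (t z) := by
    filter_upwards [nhdsWithin_le_nhds hdeq, nhdsWithin_le_nhds hsm,
      self_mem_nhdsWithin] with z hz1 hz2 hz3
    have hz3' : z ≠ 0 := hz3
    have hu : (1 : ℂ) + t z ≠ 0 := by
      intro h'
      have ht1 : t z = -1 := by linear_combination h'
      rw [ht1] at hz2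
      simp at hz2
      norm_num at hz2
    have hfz : f z = z * (1 + t z) := by
      simp only [ht_def]
      linear_combination hz1
    have hgeom : (∑ j ∈ Finset.range m, (1 + z ^ m * φ z)^j) * ((1 + z ^ m * φ z) - 1)
        = (1 + z ^ m * φ z)^m - 1 := geom_sum_mul _ m
    rw [hfz]
    simp only [hW_def, hh_def, ht_def, mul_pow]
    have hzm : z ^ m ≠ 0 := pow_ne_zero _ hz3'
    have hu' : (1 : ℂ) + z ^ m * φ z ≠ 0 := by simpa [ht_def] using hu
    have hum : ((1:ℂ) + z ^ m * φ z) ^ m ≠ 0 := pow_ne_zero _ hu'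
    field_simp
    linear_combination (-1 : ℂ) * hgeom
  have hten : Filter.Tendsto (fun z => W (f z) - W z)
      (nhdsWithin 0 {z : ℂ | z ≠ 0}) (nhds 1) := by
    have hcomp : Filter.Tendsto (fun z => h (t z)) (nhds 0) (nhds (h 0)) :=
      hhc.tendsto.comp htt
    have hφt : Filter.Tendsto (fun z => φ z / c) (nhds 0) (nhds (a / c)) :=
      hφa.continuousAt.div_const c
    have hG : Filter.Tendsto (fun z => (φ z / c) * h (t z)) (nhds 0) (nhds ((a / c) * h 0)) :=
      hφt.mul hcomp
    have hval : (a / c) * h 0 = 1 := by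
      rw [hh0, hc_def, div_mul_eq_mul_div, mul_comm a (m:ℂ),
        div_self (by rw [← hc_def]; exact hc)]
    have hG2 : Filter.Tendsto (fun z => (φ z / c) * h (t z))
        (nhdsWithin 0 {z : ℂ | z ≠ 0}) (nhds ((a / c) * h 0)) :=
      hG.mono_left nhdsWithin_le_nhds
    rw [hval] at hG2
    exact hG2.congr' (hev.mono fun z hz => hz.symm)
  have hevf : ∀ᶠ z in nhdsWithin 0 {z : ℂ | z ≠ 0}, f z ≠ 0 := by
    filter_upwards [nhdsWithin_le_nhds hdeq, nhdsWithin_le_nhds hsm,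
      self_mem_nhdsWithin] with z hz1 hz2 hz3
    have hz3' : z ≠ 0 := hz3
    have hu : (1 : ℂ) + t z ≠ 0 := by
      intro h'
      have ht1 : t z = -1 := by linear_combination h'
      rw [ht1] at hz2
      simp at hz2
      norm_num at hz2
    have hfz : f z = z * (1 + t z) := by
      simp only [ht_def]
      linear_combination hz1
    rw [hfz]
    exact mul_ne_zero hz3' hu
  have hclose : ∀ᶠ z in nhdsWithin 0 {z : ℂ | z ≠ 0}, ‖W (f z) - W z - 1‖ ≤ 1/2 := by
    have h2 := Metric.tendsto_nhds.mp hten (1/2) (by norm_num)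
    filter_upwards [h2] with z hz
    rw [Complex.dist_eq] at hz
    exact le_of_lt hz
  obtain ⟨δ, hδpos, hδ⟩ : ∃ δ > 0, ∀ z : ℂ, z ≠ 0 → ‖z‖ < δ →
      f z ≠ 0 ∧ ‖W (f z) - W z - 1‖ ≤ 1/2 := by
    have hand := hevf.and hclose
    rw [eventually_nhdsWithin_iff] at hand
    rw [Metric.eventually_nhds_iff] at hand
    obtain ⟨δ, hδpos', hδ'⟩ := hand
    refine ⟨δ, hδpos', fun z hz1 hz2 => ?_⟩
    exact hδ' (by simpa [Complex.dist_eq] using hz2) hz1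
  -- The attracting petal
  have hc0 : 0 < ‖c‖ := norm_pos_iff.mpr hc
  have hWnorm : ∀ z : ℂ, z ≠ 0 → ‖W z‖ = (‖c‖ * ‖z‖^m)⁻¹ := by
    intro z hz
    simp [hW_def, norm_inv, norm_mul, norm_pow]
  set R : ℝ := max 1 ((‖c‖ * (δ/2)^m)⁻¹) with hR_def
  have hR1 : (1:ℝ) ≤ R := le_max_left _ _
  have hRδ : (‖c‖ * (δ/2)^m)⁻¹ ≤ R := le_max_right _ _
  set Pet : Set ℂ := {z : ℂ | z ≠ 0 ∧ R < (W z).re} with hPet_def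
  have hsmall : ∀ z ∈ Pet, ‖z‖ < δ := by
    rintro z ⟨hz0, hzR⟩
    have hz0' : 0 < ‖z‖ := norm_pos_iff.mpr hz0
    have h1' : (W z).re ≤ ‖W z‖ := by
      calc (W z).re ≤ |(W z).re| := le_abs_self _
      _ ≤ ‖W z‖ := Complex.abs_re_le_norm _
      _ = ‖W z‖ := rfl
    have h2 : (‖c‖ * (δ/2)^m)⁻¹ < (‖c‖ * ‖z‖^m)⁻¹ := by
      calc (‖c‖ * (δ/2)^m)⁻¹ ≤ R := hRδ
      _ < (W z).re := hzR
      _ ≤ ‖W z‖ := h1'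
      _ = (‖c‖ * ‖z‖^m)⁻¹ := hWnorm z hz0
    have hpos1 : 0 < ‖c‖ * (δ/2)^m := by positivity
    have hpos2 : 0 < ‖c‖ * ‖z‖^m := by positivity
    have h3 : ‖c‖ * ‖z‖^m < ‖c‖ * (δ/2)^m := (inv_lt_inv₀ hpos1 hpos2).mp h2
    have h4 : ‖z‖^m < (δ/2)^m := lt_of_mul_lt_mul_left h3 (le_of_lt hc0)
    have h5 : ‖z‖ < δ/2 := lt_of_pow_lt_pow_left₀ m (by positivity) h4
    linarith
  have hstep : ∀ z ∈ Pet, f z ∈ Pet ∧ (W z).re + 1/2 ≤ (W (f z)).re := by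
    rintro z ⟨hz0, hzR⟩
    obtain ⟨hf0, hWd⟩ := hδ z hz0 (hsmall z ⟨hz0, hzR⟩)
    have hre : |(W (f z) - W z - 1).re| ≤ 1/2 := by
      calc |(W (f z) - W z - 1).re| ≤ ‖W (f z) - W z - 1‖ :=
            Complex.abs_re_le_norm _
      _ = ‖W (f z) - W z - 1‖ := rfl
      _ ≤ 1/2 := hWd
    have hre2 : (W (f z)).re - (W z).re - 1 = (W (f z) - W z - 1).re := by simp
    have hge : (W z).re + 1/2 ≤ (W (f z)).re := by
      have habs := abs_le.mp hre
      rw [← hre2] at habs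
      linarith [habs.1]
    exact ⟨⟨hf0, lt_of_lt_of_le (by linarith) hge⟩, hge⟩
  have hiter : ∀ z ∈ Pet, ∀ n : ℕ, f^[n] z ∈ Pet ∧ (W z).re + n/2 ≤ (W (f^[n] z)).re := by
    intro z hz n
    induction n with
    | zero => exact ⟨hz, by simp⟩
    | succ n ih =>
      obtain ⟨hmem, hbound⟩ := ih
      obtain ⟨hmem', hb'⟩ := hstep _ hmem
      rw [Function.iterate_succ_apply']
      refine ⟨hmem', ?_⟩
      push_cast
      linarith
  have hbound : ∀ z ∈ Pet, ∀ n : ℕ, ‖f^[n] z‖^m ≤ (‖c‖ * (R + n/2))⁻¹ := by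
    intro z hz n
    obtain ⟨⟨hy0, hyR⟩, hyb⟩ := hiter z hz n
    set y := f^[n] z
    have h1' : R + n/2 ≤ (W y).re := by
      have := hz.2
      linarith
    have h2 : (W y).re ≤ ‖W y‖ := by
      calc (W y).re ≤ |(W y).re| := le_abs_self _
      _ ≤ ‖W y‖ := Complex.abs_re_le_norm _
      _ = ‖W y‖ := rfl
    have hpos : (0:ℝ) < R + n/2 := by positivity
    have h3 : ‖W y‖⁻¹ ≤ (R + n/2)⁻¹ := inv_anti₀ hpos (h1'.trans h2)
    have h4 : ‖W y‖⁻¹ = ‖c‖ * ‖y‖^m := by rw [hWnorm y hy0, inv_inv]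
    rw [h4] at h3
    calc ‖y‖^m = ‖c‖⁻¹ * (‖c‖ * ‖y‖^m) := (inv_mul_cancel_left₀ (ne_of_gt hc0) _).symm
    _ ≤ ‖c‖⁻¹ * (R + n/2)⁻¹ := mul_le_mul_of_nonneg_left h3 (by positivity)
    _ = (‖c‖ * (R + n/2))⁻¹ := by rw [mul_inv]
  -- every convergent orbit enters the petal
  have hentry : ∀ z : ℂ, z ≠ 0 → ∃ n : ℕ, f^[n] z ∈ Pet := by
    intro z hz
    obtain ⟨hnz, htend⟩ := hH z hz
    obtain ⟨N, hN⟩ := (Metric.tendsto_atTop.mp htend) δ hδpos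
    have hNs : ∀ n, N ≤ n → ‖f^[n] z‖ < δ := by
      intro n hn
      have := hN n hn
      rwa [dist_zero_right] at this
    have hgrow : ∀ j : ℕ, (W (f^[N] z)).re + j/2 ≤ (W (f^[N+j] z)).re := by
      intro j
      induction j with
      | zero => simp
      | succ j ih =>
        have hsm' : ‖f^[N+j] z‖ < δ := hNs _ (by omega)
        obtain ⟨-, hWd⟩ := hδ _ (hnz (N+j)) hsm'
        have hre : |(W (f (f^[N+j] z)) - W (f^[N+j] z) - 1).re| ≤ 1/2 := by
          calc _ ≤ ‖W (f (f^[N+j] z)) - W (f^[N+j] z) - 1‖ := Complex.abs_re_le_norm _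
          _ = ‖W (f (f^[N+j] z)) - W (f^[N+j] z) - 1‖ := rfl
          _ ≤ 1/2 := hWd
        have hre2 : (W (f (f^[N+j] z))).re - (W (f^[N+j] z)).re - 1
            = (W (f (f^[N+j] z)) - W (f^[N+j] z) - 1).re := by simp
        have habs := abs_le.mp hre
        rw [← hre2] at habs
        have hsucc : N + (j+1) = (N+j) + 1 := by omega
        rw [hsucc, Function.iterate_succ_apply']
        push_cast
        push_cast at ih
        linarith [habs.1]
    obtain ⟨j, hj⟩ := exists_nat_gt (2 * (R - (W (f^[N] z)).re))
    refine ⟨N + j, hnz _, ?_⟩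
    have : R < (W (f^[N] z)).re + j/2 := by linarith
    exact lt_of_lt_of_le this (hgrow j)
  -- the petal is open
  have hPetOpen : IsOpen Pet := by
    have hWc : ContinuousOn W {z : ℂ | z ≠ 0} := by
      apply ContinuousOn.neg
      apply ContinuousOn.inv₀
      · exact (continuous_const.mul (continuous_pow m)).continuousOn
      · intro z hz
        exact mul_ne_zero hc (pow_ne_zero _ hz)
    have hWre : ContinuousOn (fun z => (W z).re) {z : ℂ | z ≠ 0} :=
      Complex.continuous_re.comp_continuousOn hWc
    have heq : Pet = {z : ℂ | z ≠ 0} ∩ ((fun z => (W z).re) ⁻¹' Set.Ioi R) := by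
      ext z
      simp [hPet_def, Set.mem_setOf_eq]
    rw [heq]
    exact hWre.isOpen_inter_preimage isOpen_ne isOpen_Ioi
  -- compactness of the unit circle
  have hcov : Metric.sphere (0:ℂ) 1 ⊆ ⋃ n : ℕ, (f^[n]) ⁻¹' Pet := by
    intro z hz
    have hz0 : z ≠ 0 := by
      intro h'
      rw [h'] at hz
      simp at hz
    obtain ⟨n, hn⟩ := hentry z hz0
    exact Set.mem_iUnion.mpr ⟨n, hn⟩
  obtain ⟨T, hT⟩ := (isCompact_sphere (0:ℂ) 1).elim_finite_subcover
    (fun n : ℕ => (f^[n]) ⁻¹' Pet) (fun n => (hit n).continuous.isOpen_preimage _ hPetOpen) hcov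
  set NT : ℕ := T.sup id with hNT_def
  obtain ⟨K, hK⟩ := exists_nat_ge (2 * (((1/2:ℝ)^m) * ‖c‖)⁻¹)
  have hKb : ∀ k' : ℕ, K ≤ k' → ∀ z ∈ Pet, ‖f^[k'] z‖ ≤ 1/2 := by
    intro k' hk' z hz
    have h1' := hbound z hz k'
    have hhalf : (0:ℝ) < (1/2:ℝ)^m := by positivity
    have h2 : ((1/2:ℝ)^m)⁻¹ ≤ ‖c‖ * (R + k'/2) := by
      have hkk : (2 * (((1/2:ℝ)^m) * ‖c‖)⁻¹) ≤ (k':ℝ) :=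
        le_trans hK (by exact_mod_cast Nat.cast_le.mpr hk')
      have e1 : (((1/2:ℝ)^m) * ‖c‖)⁻¹ = ((1/2:ℝ)^m)⁻¹ * ‖c‖⁻¹ := by rw [mul_inv]
      have h3 : ((1/2:ℝ)^m)⁻¹ * ‖c‖⁻¹ ≤ (k':ℝ)/2 := by
        rw [← e1]; linarith
      have h4 : ((1/2:ℝ)^m)⁻¹ ≤ ‖c‖ * ((k':ℝ)/2) := by
        have h5 := mul_le_mul_of_nonneg_left h3 (le_of_lt hc0)
        calc ((1/2:ℝ)^m)⁻¹ = ‖c‖ * (((1/2:ℝ)^m)⁻¹ * ‖c‖⁻¹) := by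
              rw [mul_comm (((1/2:ℝ)^m)⁻¹) (‖c‖⁻¹), mul_inv_cancel_left₀ (ne_of_gt hc0)]
        _ ≤ ‖c‖ * ((k':ℝ)/2) := h5
      have h5 : ‖c‖ * ((k':ℝ)/2) ≤ ‖c‖ * (R + k'/2) := by
        apply mul_le_mul_of_nonneg_left _ (le_of_lt hc0)
        linarith
      linarith
    have h6 : (‖c‖ * (R + (k':ℝ)/2))⁻¹ ≤ (1/2:ℝ)^m := by
      have h7 := inv_anti₀ (by positivity) h2
      rwa [inv_inv] at h7
    have h7 : ‖f^[k'] z‖^m ≤ (1/2:ℝ)^m := le_trans h1' h6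
    exact le_of_pow_le_pow_left₀ (by omega) (by norm_num) h7
  have hcirc : ∀ z ∈ Metric.sphere (0:ℂ) 1, ‖f^[NT + K] z‖ ≤ 1/2 := by
    intro z hz
    have hz' := hT hz
    simp only [Set.mem_iUnion, Set.mem_preimage] at hz'
    obtain ⟨n, hnT, hn⟩ := hz'
    have hnN : n ≤ NT := Finset.le_sup (f := id) hnT
    have hsplit : NT + K = (NT + K - n) + n := by omega
    rw [hsplit, Function.iterate_add_apply]
    exact hKb _ (by omega) _ hn
  -- maximum principle
  have hball : ∀ x ∈ Metric.closedBall (0:ℂ) 1, ‖f^[NT + K] x‖ ≤ 1/2 := by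
    intro x hx
    have hcl : x ∈ closure (Metric.ball (0:ℂ) 1) := by
      rwa [closure_ball (0:ℂ) one_ne_zero]
    refine Complex.norm_le_of_forall_mem_frontier_norm_le isBounded_ball
      ((hit _).diffContOnCl) ?_ hcl
    intro w hw
    rw [frontier_ball (0:ℂ) one_ne_zero] at hw
    exact hcirc w hw
  -- Schwarz lemma contradiction
  have hmaps : Set.MapsTo (f^[NT + K]) (Metric.ball (0:ℂ) 1)
      (Metric.ball ((f^[NT + K]) 0) (3/4)) := by
    intro x hx
    rw [h0n, Metric.mem_ball, dist_zero_right]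
    have := hball x (Metric.ball_subset_closedBall hx)
    linarith
  have hschwarz := Complex.norm_deriv_le_div_of_mapsTo_ball
    ((hit (NT + K)).differentiableOn) (hmaps.mono_right ball_subset_closedBall) one_pos
  rw [hdn, norm_one] at hschwarz
  norm_num at hschwarz
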